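/- MIMO pole assignment (Proposition 2.34). Let A ∈ ℝ^{n×n} and B ∈ ℝ^{n×m} be such that the pair (A, B) is controllable, i.e. the n×(nm) matrix [B, AB, …, A^{n−1}B] has rank n. Then for every monic polynomial Δ̄ ∈ ℝ[s] of degree n there exists a matrix K ∈ ℝ^{m×n} such that the characteristic polynomial of A + BK equals Δ̄. -/

import Mathlib

noncomputable section
open Matrix Polynomial
open Module
set_option maxHeartbeats 1000000
set_option synthInstance.maxHeartbeats 400000

variable {n : ℕ}

lemma adj_eq (A : Matrix (Fin n) (Fin n) ℝ) :
    matPolyEquiv (adjugate (charmatrix A)) * (X - Polynomial.C A)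
      = A.charpoly.map (algebraMap ℝ (Matrix (Fin n) (Fin n) ℝ)) := by
  have h := adjugate_mul (charmatrix A)
  have h2 := congrArg matPolyEquiv h
  rwa [_root_.map_mul, matPolyEquiv_charmatrix, matPolyEquiv_smul_one] at h2

lemma adj_coeff_vanish (hn : 0 < n) (A : Matrix (Fin n) (Fin n) ℝ) {j : ℕ} (hj : n ≤ j) :
    (matPolyEquiv (adjugate (charmatrix A))).coeff j = 0 := by
  haveI : Nonempty (Fin n) := ⟨⟨0, hn⟩⟩
  haveI : Nontrivial (Matrix (Fin n) (Fin n) ℝ) := Matrix.nonempty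
  set 𝒜 := matPolyEquiv (adjugate (charmatrix A)) with h𝒜
  rcases eq_or_ne 𝒜 0 with h0 | h0
  · simp [h0]
  have hmap : (A.charpoly.map (algebraMap ℝ (Matrix (Fin n) (Fin n) ℝ))).natDegree = n := by
    rw [(A.charpoly_monic).natDegree_map]
    simp [A.charpoly_natDegree_eq_dim]
  have hlc : 𝒜.leadingCoeff * (X - Polynomial.C A).leadingCoeff ≠ 0 := by
    rw [(monic_X_sub_C A).leadingCoeff, mul_one]
    exact leadingCoeff_ne_zero.mpr h0
  have hdeg : 𝒜.natDegree + 1 = n := by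
    have := natDegree_mul' hlc
    rw [adj_eq A, hmap, natDegree_X_sub_C] at this
    omega
  exact coeff_eq_zero_of_natDegree_lt (by omega)

lemma adj_coeff_rec (A : Matrix (Fin n) (Fin n) ℝ) (j : ℕ) :
    (matPolyEquiv (adjugate (charmatrix A))).coeff j
      = (matPolyEquiv (adjugate (charmatrix A))).coeff (j+1) * A
        + A.charpoly.coeff (j+1) • (1 : Matrix (Fin n) (Fin n) ℝ) := by
  have h := congrArg (fun q => Polynomial.coeff q (j+1)) (adj_eq A)
  simp only [mul_sub, coeff_sub, coeff_mul_X, coeff_mul_C, coeff_map] at h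
  rw [Algebra.algebraMap_eq_smul_one] at h
  linear_combination (norm := abel) h

lemma adj_coeff_formula (hn : 0 < n) (A : Matrix (Fin n) (Fin n) ℝ) :
    ∀ j, j ≤ n - 1 →
      (matPolyEquiv (adjugate (charmatrix A))).coeff (n - 1 - j)
        = ∑ i ∈ Finset.range (j+1), A.charpoly.coeff (n - j + i) • A ^ i := by
  haveI : Nonempty (Fin n) := ⟨⟨0, hn⟩⟩
  have hcn : A.charpoly.coeff n = 1 := by
    have := A.charpoly_monic.coeff_natDegree
    rwa [charpoly_natDegree_eq_dim, Fintype.card_fin] at this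
  intro j
  induction j with
  | zero =>
    intro _
    simp only [Nat.sub_zero]
    rw [adj_coeff_rec A (n-1), show n - 1 + 1 = n by omega, adj_coeff_vanish hn A le_rfl]
    simp [hcn]
  | succ j ih =>
    intro hj1
    have hj : j ≤ n - 1 := by omega
    rw [show n - 1 - (j+1) = (n - 1 - j) - 1 by omega, adj_coeff_rec A,
      show n - 1 - j - 1 + 1 = n - 1 - j by omega, ih hj]
    rw [Finset.sum_range_succ' (fun i => A.charpoly.coeff (n - (j+1) + i) • A ^ i) (j+1)]
    rw [Finset.sum_mul]
    congr 1
    · refine Finset.sum_congr rfl fun i _ => ?_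
      rw [smul_mul_assoc, ← pow_succ, show n - (j+1) + (i+1) = n - j + i by omega]
    · rw [show n - (j+1) + 0 = n - 1 - j by omega]
      simp



abbrev φR : Polynomial ℝ →+* RatFunc ℝ := algebraMap (Polynomial ℝ) (RatFunc ℝ)

lemma map_dot_adj (N : Matrix (Fin n) (Fin n) (Polynomial ℝ)) (v w : Fin n → Polynomial ℝ) :
    (φR ∘ v) ⬝ᵥ (N.map φR).mulVec (φR ∘ w) = φR (v ⬝ᵥ N.mulVec w) := by
  simp [dotProduct, mulVec, Finset.mul_sum, map_sum, _root_.map_mul]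

lemma charpoly_add_vecMulVec (A : Matrix (Fin n) (Fin n) ℝ) (b k : Fin n → ℝ) :
    (A + vecMulVec b k).charpoly =
      A.charpoly - (fun i => C (k i)) ⬝ᵥ (adjugate (charmatrix A)).mulVec (fun i => C (b i)) := by
  set cb : Fin n → Polynomial ℝ := fun i => C (b i)
  set ck : Fin n → Polynomial ℝ := fun i => C (k i)
  have hcm : charmatrix (A + vecMulVec b k)
      = charmatrix A - (Matrix.replicateCol (Fin 1) cb) * (Matrix.replicateRow (Fin 1) ck) := by
    rw [charmatrix, map_add]
    erw [← vecMulVec_eq (Fin 1)]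
    ext i j
    simp [charmatrix, vecMulVec, sub_sub, cb, ck]
  set M : Matrix (Fin n) (Fin n) (RatFunc ℝ) := (charmatrix A).map φR with hM
  have hdetM : M.det = φR A.charpoly := by
    rw [Matrix.charpoly, hM, ← RingHom.mapMatrix_apply, ← RingHom.map_det]
  have hU : IsUnit M.det := by
    rw [hdetM, isUnit_iff_ne_zero]
    exact fun h => A.charpoly_monic.ne_zero (RatFunc.algebraMap_injective ℝ (by simpa using h))
  apply RatFunc.algebraMap_injective ℝ
  have lhs : φR ((A + vecMulVec b k).charpoly)
      = (M + Matrix.replicateCol (Fin 1) (-(φR ∘ cb)) * Matrix.replicateRow (Fin 1) (φR ∘ ck)).det := by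
    rw [Matrix.charpoly]
    have := RingHom.map_det φR (charmatrix (A + vecMulVec b k))
    rw [RingHom.mapMatrix_apply] at this
    rw [this, hcm]
    congr 1
    ext i j
    simp [M, Matrix.mul_apply, Matrix.map_apply, Matrix.sub_apply, sub_eq_add_neg]
  rw [lhs]
  have hsub : M + Matrix.replicateCol (Fin 1) (-(⇑φR ∘ cb)) * Matrix.replicateRow (Fin 1) (⇑φR ∘ ck)
      = M + Matrix.replicateCol (Fin 1) (-(⇑φR ∘ cb)) * Matrix.replicateRow (Fin 1) (⇑φR ∘ ck) := rfl
  rw [det_add_mul (Matrix.replicateCol (Fin 1) (-(⇑φR ∘ cb))) (Matrix.replicateRow (Fin 1) (⇑φR ∘ ck)) hU,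
    Matrix.det_fin_one]
  have hE : ((1 + Matrix.replicateRow (Fin 1) (⇑φR ∘ ck) * M⁻¹ * Matrix.replicateCol (Fin 1) (-(⇑φR ∘ cb))
        : Matrix (Fin 1) (Fin 1) (RatFunc ℝ))) 0 0
      = 1 - ((⇑φR ∘ ck) ⬝ᵥ M⁻¹.mulVec (⇑φR ∘ cb)) := by
    simp [Matrix.mul_apply, dotProduct, mulVec, Finset.mul_sum, sub_eq_add_neg]
    rw [Finset.sum_comm]
    exact Finset.sum_congr rfl fun j _ => by
      rw [Finset.sum_mul]; exact Finset.sum_congr rfl fun i _ => by ring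
  rw [hE]
  have key : M.det * ((⇑φR ∘ ck) ⬝ᵥ M⁻¹.mulVec (⇑φR ∘ cb))
      = φR (ck ⬝ᵥ (adjugate (charmatrix A)).mulVec cb) := by
    have hadj : M.det • M⁻¹ = M.adjugate := by
      rw [Matrix.inv_def, smul_smul, Ring.mul_inverse_cancel _ hU, one_smul]
    have hadj2 : M.adjugate = (adjugate (charmatrix A)).map φR := by
      rw [hM, ← RingHom.mapMatrix_apply, ← RingHom.map_adjugate, RingHom.mapMatrix_apply]
    rw [← map_dot_adj, ← hadj2, ← hadj, smul_mulVec, dotProduct_smul, smul_eq_mul]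
  rw [map_sub, ← key, ← hdetM]
  ring

lemma siso_pole (hn : 0 < n) (A : Matrix (Fin n) (Fin n) ℝ) (b : Fin n → ℝ)
    (hspan : Submodule.span ℝ (Set.range fun j : Fin n => (A ^ (j:ℕ)).mulVec b) = ⊤)
    (Δ : Polynomial ℝ) (hm : Δ.Monic) (hd : Δ.natDegree = n) :
    ∃ k : Fin n → ℝ, (A + vecMulVec b k).charpoly = Δ := by
  haveI : Nonempty (Fin n) := ⟨⟨0, hn⟩⟩
  set 𝒜 := matPolyEquiv (adjugate (charmatrix A)) with h𝒜
  set p := A.charpoly with hp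
  have hpn : p.natDegree = n := by
    rw [hp, charpoly_natDegree_eq_dim, Fintype.card_fin]
  have hcn : p.coeff n = 1 := by
    have := A.charpoly_monic.coeff_natDegree
    rwa [charpoly_natDegree_eq_dim, Fintype.card_fin] at this
  set L : (Fin n → ℝ) →ₗ[ℝ] (Fin n → ℝ) :=
    { toFun := fun k j => k ⬝ᵥ ((𝒜.coeff (j:ℕ)).mulVec b)
      map_add' := by intro x y; funext j; simp [add_dotProduct]
      map_smul' := by intro c x; funext j; simp [smul_dotProduct] } with hL
  have hinj : Function.Injective L := by
    rw [← LinearMap.ker_eq_bot, Submodule.eq_bot_iff]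
    intro k hk
    rw [LinearMap.mem_ker] at hk
    have hk' : ∀ j : Fin n, k ⬝ᵥ ((𝒜.coeff (j:ℕ)).mulVec b) = 0 := fun j => congrFun hk j
    have hA : ∀ t, t < n → k ⬝ᵥ ((A ^ t).mulVec b) = 0 := by
      intro t
      induction t using Nat.strong_induction_on with
      | _ t iht =>
        intro ht
        have h1 := hk' ⟨n - 1 - t, by omega⟩
        rw [show (((⟨n - 1 - t, by omega⟩ : Fin n)) : ℕ) = n - 1 - t from rfl,
          adj_coeff_formula hn A t (by omega)] at h1
        have hexp : ∀ (s : Finset ℕ) (c : ℕ → ℝ),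
            k ⬝ᵥ (∑ i ∈ s, c i • A ^ i).mulVec b = ∑ i ∈ s, c i * (k ⬝ᵥ (A ^ i).mulVec b) := by
          intro s c
          induction s using Finset.induction_on with
          | empty => simp
          | insert _ _ hx ih =>
            rw [Finset.sum_insert hx, Finset.sum_insert hx, Matrix.add_mulVec,
              dotProduct_add, smul_mulVec, dotProduct_smul, smul_eq_mul, ih]
        rw [hexp] at h1
        rw [Finset.sum_range_succ] at h1
        have hz : ∑ i ∈ Finset.range t, p.coeff (n - t + i) * (k ⬝ᵥ (A ^ i).mulVec b) = 0 :=
          Finset.sum_eq_zero fun i hi => by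
            rw [iht i (Finset.mem_range.mp hi) (lt_trans (Finset.mem_range.mp hi) ht), mul_zero]
        rw [hz, zero_add, show n - t + t = n by omega, hcn, one_mul] at h1
        exact h1
    have horto : ∀ v ∈ Submodule.span ℝ (Set.range fun j : Fin n => (A ^ (j:ℕ)).mulVec b),
        k ⬝ᵥ v = 0 := by
      intro v hv
      induction hv using Submodule.span_induction with
      | mem x h => obtain ⟨j, rfl⟩ := h; exact hA j j.isLt
      | zero => simp
      | add x y _ _ hx hy => rw [dotProduct_add, hx, hy, add_zero]
      | smul c x _ hx => rw [dotProduct_smul, hx, smul_zero]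
    exact dotProduct_self_eq_zero.mp (horto k (by rw [hspan]; trivial))
  obtain ⟨k, hkk⟩ := (LinearMap.injective_iff_surjective).mp hinj (fun j => (p - Δ).coeff (j:ℕ))
  refine ⟨k, ?_⟩
  rw [charpoly_add_vecMulVec]
  have hw : (fun i => C (k i)) ⬝ᵥ (adjugate (charmatrix A)).mulVec (fun i => C (b i)) = p - Δ := by
    apply Polynomial.ext; intro j
    have hcoeff : ((fun i => C (k i)) ⬝ᵥ (adjugate (charmatrix A)).mulVec (fun i => C (b i))).coeff j
        = k ⬝ᵥ ((𝒜.coeff j).mulVec b) := by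
      simp [dotProduct, mulVec, finset_sum_coeff, coeff_C_mul, coeff_mul_C, h𝒜,
        matPolyEquiv_coeff_apply, Finset.mul_sum]
    by_cases hj : j < n
    · rw [hcoeff]
      exact congrFun hkk ⟨j, hj⟩
    · push_neg at hj
      rw [hcoeff, adj_coeff_vanish hn A hj, coeff_sub]
      have h0 : p.coeff j - Δ.coeff j = 0 := by
        rcases eq_or_lt_of_le hj with rfl | hj'
        · have hΔn : Δ.coeff n = 1 := by
            conv_lhs => rw [← hd]
            exact hm.coeff_natDegree
          rw [hcn, hΔn, sub_self]
        · rw [coeff_eq_zero_of_natDegree_lt (by rw [hpn]; omega),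
            coeff_eq_zero_of_natDegree_lt (by rw [hd]; omega), sub_self]
      rw [h0]
      simp
  rw [hw]
  ring

variable {m : ℕ}


lemma chain_exists (hn : 0 < n) (A : Matrix (Fin n) (Fin n) ℝ) (B : Matrix (Fin n) (Fin m) ℝ)
    (hspan : Submodule.span ℝ (Set.range fun jl : Fin n × Fin m =>
        (A ^ ((jl.1 : ℕ))).mulVec (B.mulVec (Pi.single jl.2 1))) = ⊤) :
    ∀ k (_ : 1 ≤ k) (_ : k ≤ n), ∃ (x : Fin k → (Fin n → ℝ)) (u : Fin k → (Fin m → ℝ)),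
      LinearIndependent ℝ x ∧
      x ⟨0, by omega⟩ = B.mulVec (u ⟨0, by omega⟩) ∧
      ∀ (i : ℕ) (h : i + 1 < k),
        x ⟨i+1, h⟩ = A.mulVec (x ⟨i, by omega⟩) + B.mulVec (u ⟨i+1, h⟩) := by
  intro k
  induction k with
  | zero => omega
  | succ k ih =>
    intro hk0 hk1
    rcases Nat.eq_zero_or_pos k with rfl | hkpos
    · -- base case : length 1
      have hBne : ∃ u0 : Fin m → ℝ, B.mulVec u0 ≠ 0 := by
        by_contra hc
        push_neg at hc
        have hbot : Submodule.span ℝ (Set.range fun jl : Fin n × Fin m =>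
            (A ^ ((jl.1 : ℕ))).mulVec (B.mulVec (Pi.single jl.2 1))) ≤ ⊥ := by
          rw [Submodule.span_le]
          rintro v ⟨jl, rfl⟩
          simp [hc (Pi.single jl.2 1)]
        rw [hspan] at hbot
        have h1 : (Pi.single (⟨0, hn⟩ : Fin n) (1:ℝ) : Fin n → ℝ) = 0 := by
          simpa using hbot (Submodule.mem_top (x := (Pi.single (⟨0, hn⟩ : Fin n) (1:ℝ) : Fin n → ℝ)))
        have := congrFun h1 ⟨0, hn⟩
        simp at this
      obtain ⟨u0, hu0⟩ := hBne
      refine ⟨fun _ => B.mulVec u0, fun _ => u0, ?_, rfl, by omega⟩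
      exact (linearIndependent_unique_iff (ι := Fin 1)).mpr hu0
    · -- inductive step
      obtain ⟨x, u, hind, hx0, hchain⟩ := ih hkpos (by omega)
      set V := Submodule.span ℝ (Set.range x) with hV
      set last : Fin k := ⟨k-1, by omega⟩ with hlast
      by_cases hcase : ∃ w : Fin m → ℝ, A.mulVec (x last) + B.mulVec w ∉ V
      · obtain ⟨w, hw⟩ := hcase
        refine ⟨Fin.snoc x (A.mulVec (x last) + B.mulVec w), Fin.snoc u w, ?_, ?_, ?_⟩
        · exact linearIndependent_fin_snoc.mpr ⟨hind, hw⟩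
        · have h0 : (⟨0, by omega⟩ : Fin (k+1)) = Fin.castSucc ⟨0, hkpos⟩ := rfl
          rw [h0, Fin.snoc_castSucc, Fin.snoc_castSucc, hx0]
        · intro i h
          by_cases hik : i + 1 < k
          · have e1 : (⟨i+1, h⟩ : Fin (k+1)) = Fin.castSucc ⟨i+1, hik⟩ := rfl
            have e2 : (⟨i, by omega⟩ : Fin (k+1)) = Fin.castSucc ⟨i, by omega⟩ := rfl
            rw [e1, e2, Fin.snoc_castSucc, Fin.snoc_castSucc, Fin.snoc_castSucc]
            exact hchain i hik
          · have hik' : i + 1 = k := by omega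
            have e1 : (⟨i+1, h⟩ : Fin (k+1)) = Fin.last k := by
              apply Fin.ext; simp [hik']
            have e2 : (⟨i, by omega⟩ : Fin (k+1)) = Fin.castSucc ⟨i, by omega⟩ := rfl
            have e3 : (⟨i, by omega⟩ : Fin k) = last := by
              apply Fin.ext; simp [hlast]; omega
            rw [e1, e2, Fin.snoc_last, Fin.snoc_last, Fin.snoc_castSucc, e3]
      · push_neg at hcase
        exfalso
        have hAlast : A.mulVec (x last) ∈ V := by
          have := hcase 0
          simpa using this
        have hB : ∀ w : Fin m → ℝ, B.mulVec w ∈ V := by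
          intro w
          have h1 := hcase w
          have := Submodule.sub_mem V h1 hAlast
          simpa using this
        have hAx : ∀ i : Fin k, A.mulVec (x i) ∈ V := by
          intro i
          by_cases hik : (i : ℕ) + 1 < k
          · have hc := hchain i hik
            have hxi : x ⟨(i:ℕ)+1, hik⟩ ∈ V := Submodule.subset_span ⟨_, rfl⟩
            have : A.mulVec (x ⟨(i:ℕ), by omega⟩) = x ⟨(i:ℕ)+1, hik⟩ - B.mulVec (u ⟨(i:ℕ)+1, hik⟩) := by
              rw [hc]; ring
            have e : (⟨(i:ℕ), by omega⟩ : Fin k) = i := Fin.ext rfl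
            rw [e] at this
            rw [this]
            exact Submodule.sub_mem V hxi (hB _)
          · have e : i = last := by apply Fin.ext; simp [hlast]; omega
            rw [e]; exact hAlast
        have hAV : ∀ v ∈ V, A.mulVec v ∈ V := by
          intro v hv
          induction hv using Submodule.span_induction with
          | mem y hy => obtain ⟨i, rfl⟩ := hy; exact hAx i
          | zero => simp
          | add a c _ _ ha hc => rw [Matrix.mulVec_add]; exact Submodule.add_mem V ha hc
          | smul c a _ ha => rw [Matrix.mulVec_smul]; exact Submodule.smul_mem V c ha
        have hgen : ∀ (j : ℕ) (l : Fin m), (A ^ j).mulVec (B.mulVec (Pi.single l 1)) ∈ V := by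
          intro j l
          induction j with
          | zero => simpa using hB (Pi.single l 1)
          | succ j ihj =>
            rw [pow_succ', ← Matrix.mulVec_mulVec]
            exact hAV _ ihj
        have hVtop : V = ⊤ := by
          rw [eq_top_iff, ← hspan, Submodule.span_le]
          rintro v ⟨⟨j, l⟩, rfl⟩
          exact hgen j l
        have hfr : finrank ℝ V = k := by
          rw [hV, finrank_span_eq_card hind, Fintype.card_fin]
        rw [hVtop, finrank_top, finrank_pi] at hfr
        simp at hfr
        omega

/-- The controllability matrix `[B, AB, …, A^(n-1) B]` of the pair `(A, B)`,
as an `n × (n·m)` matrix indexed by `Fin n × Fin m`. -/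
def ctrbMat (n m : ℕ) (A : Matrix (Fin n) (Fin n) ℝ) (B : Matrix (Fin n) (Fin m) ℝ) :
    Matrix (Fin n) (Fin n × Fin m) ℝ :=
  Matrix.of fun i kj => (A ^ (kj.1 : ℕ) * B) i kj.2

/-- MIMO pole assignment (Proposition 2.34): if `(A, B)` is controllable, then for
every monic real polynomial `Δ̄` of degree `n` there exists a matrix `K` with
`charpoly (A + B K) = Δ̄`. -/
theorem mimo_pole_assignment
    (n m : ℕ) (A : Matrix (Fin n) (Fin n) ℝ) (B : Matrix (Fin n) (Fin m) ℝ)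
    (hctrb : (ctrbMat n m A B).rank = n) :
    ∀ Δ : Polynomial ℝ, Δ.Monic → Δ.natDegree = n →
      ∃ K : Matrix (Fin m) (Fin n) ℝ, (A + B * K).charpoly = Δ := by
  intro Δ hm hd
  rcases Nat.eq_zero_or_pos n with rfl | hn
  · refine ⟨0, ?_⟩
    have h1 : (A + B * (0 : Matrix (Fin m) (Fin 0) ℝ)).charpoly = 1 := by
      rw [Matrix.charpoly, Matrix.det_isEmpty]
    rw [h1]
    exact ((hm.natDegree_eq_zero).mp hd).symm
  · have hspan : Submodule.span ℝ (Set.range fun jl : Fin n × Fin m =>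
        (A ^ ((jl.1 : ℕ))).mulVec (B.mulVec (Pi.single jl.2 1))) = ⊤ := by
      have h1 : LinearMap.range (ctrbMat n m A B).mulVecLin = ⊤ := by
        apply Submodule.eq_top_of_finrank_eq
        have : (ctrbMat n m A B).rank = finrank ℝ (LinearMap.range (ctrbMat n m A B).mulVecLin) := rfl
        rw [← this, hctrb, finrank_pi]
        simp
      rw [Matrix.range_mulVecLin] at h1
      rw [← h1]
      have hfun : (ctrbMat n m A B)ᵀ
          = fun jl : Fin n × Fin m => (A ^ ((jl.1 : ℕ))).mulVec (B.mulVec (Pi.single jl.2 1)) := by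
        funext jl i
        simp only [ctrbMat, Matrix.transpose_apply, Matrix.of_apply, Matrix.mul_apply,
          Matrix.mulVec, dotProduct, Pi.single_apply, mul_ite, mul_one, mul_zero,
          Finset.sum_ite_eq', Finset.mem_univ, if_true]
      rw [← hfun]; rfl
    obtain ⟨x, u, hind, hx0, hchain⟩ := chain_exists hn A B hspan n hn le_rfl
    haveI : Nonempty (Fin n) := ⟨⟨0, hn⟩⟩
    have hxspan : ⊤ ≤ Submodule.span ℝ (Set.range x) := by
      exact (hind.span_eq_top_of_card_eq_finrank (by rw [finrank_pi])).ge
    let bas : Basis (Fin n) ℝ (Fin n → ℝ) := Basis.mk hind hxspan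
    let g : (Fin n → ℝ) →ₗ[ℝ] (Fin m → ℝ) :=
      bas.constr ℝ (fun i : Fin n => if h : (i : ℕ) + 1 < n then u ⟨(i:ℕ)+1, h⟩ else 0)
    let F : Matrix (Fin m) (Fin n) ℝ := LinearMap.toMatrix' g
    have hF : ∀ v, F.mulVec v = g v := by
      intro v
      rw [← Matrix.toLin'_apply, Matrix.toLin'_toMatrix']
    set A' := A + B * F with hA'
    have hstep : ∀ (i : ℕ) (h : i + 1 < n), A'.mulVec (x ⟨i, by omega⟩) = x ⟨i+1, h⟩ := by
      intro i h
      rw [hA', Matrix.add_mulVec, ← Matrix.mulVec_mulVec, hF]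
      have hx : x ⟨i, by omega⟩ = bas ⟨i, by omega⟩ := (Basis.mk_apply hind hxspan _).symm
      have hgx : g (x ⟨i, by omega⟩) = u ⟨i+1, h⟩ := by
        rw [hx, Basis.constr_basis]
        simp only [h, dif_pos]
      rw [hgx]
      exact (hchain i h).symm
    have hpow : ∀ (j : ℕ) (hj : j < n), (A' ^ j).mulVec (x ⟨0, hn⟩) = x ⟨j, hj⟩ := by
      intro j
      induction j with
      | zero => intro hj; simp
      | succ j ihj =>
        intro hj
        rw [pow_succ', ← Matrix.mulVec_mulVec, ihj (by omega), hstep j hj]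
    have hspan2 : Submodule.span ℝ
        (Set.range fun j : Fin n => (A' ^ (j : ℕ)).mulVec (x ⟨0, hn⟩)) = ⊤ := by
      have he : (fun j : Fin n => (A' ^ (j : ℕ)).mulVec (x ⟨0, hn⟩)) = x := by
        funext j
        rw [hpow j j.isLt]
      rw [he]
      exact top_unique hxspan
    obtain ⟨kv, hkv⟩ := siso_pole hn A' (x ⟨0, hn⟩) hspan2 Δ hm hd
    refine ⟨F + vecMulVec (u ⟨0, hn⟩) kv, ?_⟩
    have hBK : B * (F + vecMulVec (u ⟨0, hn⟩) kv)
        = B * F + vecMulVec (x ⟨0, hn⟩) kv := by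
      rw [Matrix.mul_add]
      congr 1
      ext i j
      rw [hx0]
      simp [vecMulVec, Matrix.mul_apply, mulVec, dotProduct, Finset.sum_mul, mul_assoc]
    rw [hBK, ← add_assoc, ← hA', hkv]
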